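/- Let (x_n)_{n∈ℤ} be a (1,4)-sequence. Then for all n ∈ ℤ one has x_{2n+2} + x_{2n−2} = c·x_{2n}, where c = (x_0⁴ + (1 + x_1)²)/(x_0²·x_1). In particular (x_{2n+2} + x_{2n−2})/x_{2n} is independent of n, and c also equals (x_2⁴ + (1 + x_1)²)/(x_2²·x_1). -/

import Mathlib

/-- Step lemma for the odd recurrence: the invariant form is preserved
when replacing `a` by `d` with `d * a = 1 + b ^ 4`. -/
lemma q14_step1 (a b d c : ℝ) (ha : a ≠ 0) (h0 : d * a = 1 + b ^ 4)
    (h : b ^ 4 + (1 + a) ^ 2 = c * (b ^ 2 * a)) :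
    b ^ 4 + (1 + d) ^ 2 = c * (b ^ 2 * d) := by
  have key : (b ^ 4 + (1 + d) ^ 2) * a ^ 2 = (c * (b ^ 2 * d)) * a ^ 2 := by
    linear_combination (d * a) * h + (a * (d - a)) * h0
  exact mul_right_cancel₀ (pow_ne_zero 2 ha) key

/-- Step lemma for the even recurrence: the invariant form is preserved
when replacing `b` by `e` with `e * b = 1 + d`. -/
lemma q14_step2 (b d e c : ℝ) (hb : b ≠ 0) (h0 : e * b = 1 + d)
    (h : b ^ 4 + (1 + d) ^ 2 = c * (b ^ 2 * d)) :
    e ^ 4 + (1 + d) ^ 2 = c * (e ^ 2 * d) := by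
  have key : (e ^ 4 + (1 + d) ^ 2) * b ^ 4 = (c * (e ^ 2 * d)) * b ^ 4 := by
    linear_combination (1 + d) ^ 2 * h +
      ((e * b + 1 + d) * (e ^ 2 * b ^ 2 + (1 + d) ^ 2 - c * d * b ^ 2)) * h0
  exact mul_right_cancel₀ (pow_ne_zero 4 hb) key

/-- conserved quantity of the (1,4) case. -/
theorem q14_conserved_quantity (x : ℤ → ℝ) (hpos : ∀ n, 0 < x n)
    (heven : ∀ n : ℤ, x (2 * n) = (1 + x (2 * n - 1)) / x (2 * n - 2))
    (hodd : ∀ n : ℤ, x (2 * n + 1) = (1 + x (2 * n) ^ 4) / x (2 * n - 1))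
    (c : ℝ) (hc : c = (x 0 ^ 4 + (1 + x 1) ^ 2) / (x 0 ^ 2 * x 1)) :
    (∀ n : ℤ, x (2 * n + 2) + x (2 * n - 2) = c * x (2 * n)) ∧
    c = (x 2 ^ 4 + (1 + x 1) ^ 2) / (x 2 ^ 2 * x 1) := by
  have hne : ∀ n : ℤ, x n ≠ 0 := fun n => (hpos n).ne'
  have hE : ∀ n : ℤ, x (2 * n) * x (2 * n - 2) = 1 + x (2 * n - 1) := by
    intro n; rw [heven n, div_mul_cancel₀ _ (hne _)]
  have hO : ∀ n : ℤ, x (2 * n + 1) * x (2 * n - 1) = 1 + x (2 * n) ^ 4 := by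
    intro n; rw [hodd n, div_mul_cancel₀ _ (hne _)]
  -- The invariant P n
  have up : ∀ m : ℤ,
      x (2 * m) ^ 4 + (1 + x (2 * m + 1)) ^ 2 = c * (x (2 * m) ^ 2 * x (2 * m + 1)) →
      x (2 * (m + 1)) ^ 4 + (1 + x (2 * (m + 1) + 1)) ^ 2
        = c * (x (2 * (m + 1)) ^ 2 * x (2 * (m + 1) + 1)) := by
    intro m ih
    have hEm := hE (m + 1)
    have hOm := hO (m + 1)
    simp only [show (2 * ((m : ℤ) + 1)) = 2 * m + 2 by ring,
      show (2 * ((m : ℤ) + 1) - 2) = 2 * m by ring,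
      show (2 * ((m : ℤ) + 1) - 1) = 2 * m + 1 by ring,
      show (2 * ((m : ℤ) + 1) + 1) = 2 * m + 3 by ring,
      show (2 * (m : ℤ) + 2 - 2) = 2 * m by ring,
      show (2 * (m : ℤ) + 2 - 1) = 2 * m + 1 by ring,
      show (2 * (m : ℤ) + 2 + 1) = 2 * m + 3 by ring] at hEm hOm ⊢
    have hQ : x (2 * m + 2) ^ 4 + (1 + x (2 * m + 1)) ^ 2
        = c * (x (2 * m + 2) ^ 2 * x (2 * m + 1)) :=
      q14_step2 _ _ _ _ (hne _) hEm ih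
    exact q14_step1 _ _ _ _ (hne (2 * m + 1)) hOm hQ
  have down : ∀ m : ℤ,
      x (2 * m) ^ 4 + (1 + x (2 * m + 1)) ^ 2 = c * (x (2 * m) ^ 2 * x (2 * m + 1)) →
      x (2 * (m - 1)) ^ 4 + (1 + x (2 * (m - 1) + 1)) ^ 2
        = c * (x (2 * (m - 1)) ^ 2 * x (2 * (m - 1) + 1)) := by
    intro m ih
    have hEm := hE m
    have hOm := hO m
    simp only [show (2 * ((m : ℤ) - 1)) = 2 * m - 2 by ring,
      show (2 * ((m : ℤ) - 1) + 1) = 2 * m - 1 by ring,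
      show (2 * (m : ℤ) - 2 + 1) = 2 * m - 1 by ring]
    -- Q m from P m (reverse odd step)
    have hQ : x (2 * m) ^ 4 + (1 + x (2 * m - 1)) ^ 2
        = c * (x (2 * m) ^ 2 * x (2 * m - 1)) := by
      refine q14_step1 _ _ _ _ (hne (2 * m + 1)) ?_ ih
      linarith [hOm, mul_comm (x (2 * m - 1)) (x (2 * m + 1))]
    -- P (m-1) from Q m (reverse even step)
    refine q14_step2 _ _ _ _ (hne (2 * m)) ?_ hQ
    linarith [hEm, mul_comm (x (2 * m - 2)) (x (2 * m))]
  have hP : ∀ n : ℤ,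
      x (2 * n) ^ 4 + (1 + x (2 * n + 1)) ^ 2 = c * (x (2 * n) ^ 2 * x (2 * n + 1)) := by
    intro n
    induction n using Int.induction_on with
    | zero =>
      norm_num
      rw [hc, div_mul_cancel₀ _ (mul_ne_zero (pow_ne_zero 2 (hne 0)) (hne 1))]
    | succ k ih => exact up k ih
    | pred k ih =>
      have := down (-k) ih
      simpa [show (-(k : ℤ) - 1) = -(k + 1 : ℤ) by ring] using this
  -- Q n for all n
  have hQ : ∀ n : ℤ,
      x (2 * n) ^ 4 + (1 + x (2 * n - 1)) ^ 2 = c * (x (2 * n) ^ 2 * x (2 * n - 1)) := by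
    intro n
    refine q14_step1 _ _ _ _ (hne (2 * n + 1)) ?_ (hP n)
    linarith [hO n, mul_comm (x (2 * n - 1)) (x (2 * n + 1))]
  constructor
  · intro n
    have h1 := hE (n + 1)
    simp only [show (2 * ((n : ℤ) + 1)) = 2 * n + 2 by ring,
      show (2 * ((n : ℤ) + 1) - 2) = 2 * n by ring,
      show (2 * ((n : ℤ) + 1) - 1) = 2 * n + 1 by ring,
      show (2 * (n : ℤ) + 2 - 2) = 2 * n by ring,
      show (2 * (n : ℤ) + 2 - 1) = 2 * n + 1 by ring] at h1
    have h2 := hE n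
    have h3 := hO n
    have h4 := hQ n
    have key : (x (2 * n + 2) + x (2 * n - 2)) * (x (2 * n) * x (2 * n - 1))
        = (c * x (2 * n)) * (x (2 * n) * x (2 * n - 1)) := by
      linear_combination x (2 * n - 1) * h1 + x (2 * n - 1) * h2 + h3 + h4
    exact mul_right_cancel₀ (mul_ne_zero (hne _) (hne _)) key
  · have h := hQ 1
    norm_num at h
    rw [eq_div_iff (mul_ne_zero (pow_ne_zero 2 (hne 2)) (hne 1))]
    linear_combination -h
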